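/- Soundness of the Bind rule: if x does not occur in t, then the clause C' ∨ x ≉ t entails the clause C'σ where σ = {x → t}: every interpretation and valuation satisfying C' ∨ x ≉ t for all valuations satisfies C'σ for all valuations. -/

import Mathlib

inductive Tm (V F : Type) : Type
  | var : V → Tm V F
  | app : F → List (Tm V F) → Tm V F

def Tm.subst {V W F : Type} (σ : V → Tm W F) : Tm V F → Tm W F
  | .var x => σ x
  | .app f ts => .app f (ts.attach.map fun t => t.1.subst σ)
decreasing_by have := List.sizeOf_lt_of_mem t.2; simp [Tm.app.sizeOf_spec]; omega

structure Interp (F : Type) where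
  U : Type
  ne : Nonempty U
  fn : F → List U → U

def Tm.eval {V F} (M : Interp F) (ξ : V → M.U) : Tm V F → M.U
  | .var x => ξ x
  | .app f ts => M.fn f (ts.attach.map fun t => t.1.eval M ξ)
decreasing_by have := List.sizeOf_lt_of_mem t.2; simp [Tm.app.sizeOf_spec]; omega

structure Lit (V F : Type) where
  pos : Bool
  lhs : Tm V F
  rhs : Tm V F

def Lit.subst {V W F} (σ : V → Tm W F) (L : Lit V F) : Lit W F :=
  ⟨L.pos, L.lhs.subst σ, L.rhs.subst σ⟩

def Lit.holds {V F} (M : Interp F) (ξ : V → M.U) (L : Lit V F) : Prop :=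
  match L.pos with
  | true => L.lhs.eval M ξ = L.rhs.eval M ξ
  | false => L.lhs.eval M ξ ≠ L.rhs.eval M ξ

abbrev Clause (V F : Type) := List (Lit V F)

def Clause.holds {V F} (M : Interp F) (ξ : V → M.U) (C : Clause V F) : Prop :=
  ∃ L ∈ C, L.holds M ξ

inductive Occurs {V F : Type} (x : V) : Tm V F → Prop
  | var : Occurs x (.var x)
  | app {f ts t} : t ∈ ts → Occurs x t → Occurs x (.app f ts)

inductive Subterm {V F : Type} : Tm V F → Tm V F → Prop
  | mem {t f ts} : t ∈ ts → Subterm t (.app f ts)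
  | step {t s f ts} : Subterm t s → s ∈ ts → Subterm t (.app f ts)

def Tm.size {V F : Type} : Tm V F → Nat
  | .var _ => 1
  | .app _ ts => 1 + (ts.attach.map fun t => t.1.size).sum
decreasing_by have := List.sizeOf_lt_of_mem t.2; simp [Tm.app.sizeOf_spec]; omega

def MulLt {α : Type} (lt : α → α → Prop) (N M : Multiset α) : Prop :=
  ∃ X Y Z : Multiset α, X ≠ 0 ∧ M = Z + X ∧ N = Z + Y ∧ ∀ y ∈ Y, ∃ x ∈ X, lt y x


theorem Tm.eval_subst {V W F : Type} (M : Interp F) (σ : V → Tm W F) (ξ : W → M.U) :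
    ∀ u : Tm V F, (u.subst σ).eval M ξ = u.eval M (fun y => (σ y).eval M ξ)
  | .var y => by rw [Tm.subst, Tm.eval]
  | .app f ts => by
      rw [Tm.subst, Tm.eval, Tm.eval]
      congr 1
      rw [List.map_attach_eq_pmap]
      apply List.ext_getElem (by simp)
      intro i h1 h2
      have hi : i < ts.length := by simpa using h2
      simp only [List.getElem_map, List.getElem_attach, List.getElem_pmap]
      exact Tm.eval_subst M σ ξ (ts[i]'hi)
decreasing_by have := List.sizeOf_lt_of_mem (ts.getElem_mem hi); simp [Tm.app.sizeOf_spec]; omega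

theorem Tm.eval_congr {V F : Type} (M : Interp F) (ξ ξ' : V → M.U) :
    ∀ u : Tm V F, (∀ y, Occurs y u → ξ y = ξ' y) → u.eval M ξ = u.eval M ξ'
  | .var y, h => by rw [Tm.eval, Tm.eval]; exact h y .var
  | .app f ts, h => by
      rw [Tm.eval, Tm.eval]
      congr 1
      apply List.ext_getElem (by simp)
      intro i h1 h2
      have hi : i < ts.length := by simpa using h2
      simp only [List.getElem_map, List.getElem_attach]
      exact Tm.eval_congr M ξ ξ' (ts[i]'hi) (fun y hy => h y (.app (ts.getElem_mem _) hy))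
decreasing_by have := List.sizeOf_lt_of_mem (ts.getElem_mem hi); simp [Tm.app.sizeOf_spec]; omega

theorem stmt_18 {V F : Type} [DecidableEq V] (x : V) (t : Tm V F)
    (hocc : ¬ Occurs x t) (C' : Clause V F) (M : Interp F)
    (h : ∀ ξ : V → M.U, Clause.holds M ξ (C' ++ [⟨false, Tm.var x, t⟩])) :
    ∀ ξ : V → M.U,
      Clause.holds M ξ
        (C'.map (Lit.subst fun y => if y = x then t else Tm.var y)) := by
  intro ξ
  set σ : V → Tm V F := fun y => if y = x then t else Tm.var y with hσ
  set ξ' : V → M.U := fun y => (σ y).eval M ξ with hξ'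
  obtain ⟨L, hL, hLh⟩ := h ξ'
  rcases List.mem_append.1 hL with hL | hL
  · refine ⟨L.subst σ, List.mem_map_of_mem hL, ?_⟩
    unfold Lit.holds Lit.subst at *
    rw [Tm.eval_subst, Tm.eval_subst]
    exact hLh
  · exfalso
    simp only [List.mem_singleton] at hL
    subst hL
    apply hLh
    show (Tm.var x).eval M ξ' = t.eval M ξ'
    rw [Tm.eval]
    show (σ x).eval M ξ = _
    rw [hσ]; simp only [if_pos rfl]
    apply Tm.eval_congr
    intro y hy
    rw [hξ', hσ]
    simp only
    rw [if_neg]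
    · rw [Tm.eval]
    · rintro rfl; exact hocc hy
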